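/- Every finite simple graph with the 4-extension property contains both an induced copy of the claw K₁,₃ and an induced copy of the diamond K₄∖e; moreover, there exists a finite simple graph with the 3-extension property containing neither an induced K₁,₃ nor an induced K₄∖e. (Hence the extension indices of K₁,₃ and of K₄∖e both equal 4.) -/

import Mathlib

set_option maxRecDepth 40000

/-- A graph `G` has the `k`-extension property if for every two disjoint finite sets
`X`, `Y` of vertices with `|X ∪ Y| < k` there is a vertex `z ∉ X ∪ Y` adjacent to
every vertex of `X` and to no vertex of `Y`. -/
def HasExtensionProperty {V : Type} (G : SimpleGraph V) (k : ℕ) : Prop :=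
  ∀ X Y : Finset V, Disjoint X Y → X.card + Y.card < k →
    ∃ z : V, z ∉ X ∧ z ∉ Y ∧ (∀ x ∈ X, G.Adj z x) ∧ (∀ y ∈ Y, ¬ G.Adj z y)

/-- The claw `K₁,₃`: the centre `0` is adjacent to the three pairwise non-adjacent
leaves `1`, `2`, `3`. -/
def clawGraph : SimpleGraph (Fin 4) :=
  SimpleGraph.fromRel (fun a _ => a = 0)

/-- The diamond `K₄ ∖ e`: the complete graph on 4 vertices minus the edge `{2, 3}`. -/
def diamondGraph : SimpleGraph (Fin 4) :=
  SimpleGraph.fromRel (fun a b => ¬((a = 2 ∧ b = 3) ∨ (a = 3 ∧ b = 2)))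

/-- The 3×3 rook's graph. -/
instance : DecidableRel clawGraph.Adj :=
  fun a b => inferInstanceAs (Decidable (a ≠ b ∧ (a = 0 ∨ b = 0)))

instance : DecidableRel diamondGraph.Adj :=
  fun a b => inferInstanceAs (Decidable (a ≠ b ∧
    (¬((a = 2 ∧ b = 3) ∨ (a = 3 ∧ b = 2)) ∨ ¬((b = 2 ∧ a = 3) ∨ (b = 3 ∧ a = 2)))))

def rookGraph : SimpleGraph (Fin 9) where
  Adj a b := a ≠ b ∧ (a.val / 3 = b.val / 3 ∨ a.val % 3 = b.val % 3)
  symm := by constructor; intro a b ⟨h1, h2⟩; exact ⟨h1.symm, h2.imp Eq.symm Eq.symm⟩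
  loopless := by constructor; intro a ⟨h1, _⟩; exact h1 rfl

instance : DecidableRel rookGraph.Adj :=
  fun a b => inferInstanceAs (Decidable (a ≠ b ∧ (a.val / 3 = b.val / 3 ∨ a.val % 3 = b.val % 3)))

lemma rook_pair : ∀ a b : Fin 9, ∀ i j : Bool, a ≠ b →
    ∃ z : Fin 9, z ≠ a ∧ z ≠ b ∧ (rookGraph.Adj z a ↔ i = true) ∧
      (rookGraph.Adj z b ↔ j = true) := by decide

lemma rook_single : ∀ a : Fin 9, ∀ i : Bool,
    ∃ z : Fin 9, z ≠ a ∧ (rookGraph.Adj z a ↔ i = true) := by decide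

lemma rook_claw_free : ∀ c l1 l2 l3 : Fin 9,
    ¬(rookGraph.Adj c l1 ∧ rookGraph.Adj c l2 ∧ rookGraph.Adj c l3 ∧
      ¬rookGraph.Adj l1 l2 ∧ ¬rookGraph.Adj l1 l3 ∧ ¬rookGraph.Adj l2 l3 ∧
      l1 ≠ l2 ∧ l1 ≠ l3 ∧ l2 ≠ l3) := by decide

lemma rook_diamond_free : ∀ a b c d : Fin 9,
    ¬(rookGraph.Adj a b ∧ rookGraph.Adj a c ∧ rookGraph.Adj a d ∧ rookGraph.Adj b c ∧
      rookGraph.Adj b d ∧ ¬rookGraph.Adj c d ∧ c ≠ d) := by decide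

lemma rook_ext : HasExtensionProperty rookGraph 3 := by
  intro X Y hdisj hcard
  have hXY : (X ∪ Y).card ≤ 2 := by
    rw [Finset.card_union_of_disjoint hdisj]; omega
  have h2 : (X ∪ Y).card = 0 ∨ (X ∪ Y).card = 1 ∨ (X ∪ Y).card = 2 := by omega
  rcases h2 with h | h | h
  · rw [Finset.card_eq_zero, Finset.union_eq_empty] at h
    obtain ⟨hX, hY⟩ := h
    exact ⟨0, by simp [hX], by simp [hY], by simp [hX], by simp [hY]⟩
  · rw [Finset.card_eq_one] at h
    obtain ⟨a, ha⟩ := h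
    obtain ⟨z, hz1, hz2⟩ := rook_single a (decide (a ∈ X))
    have memX : ∀ x ∈ X, x = a := fun x hx => by
      have : x ∈ X ∪ Y := Finset.mem_union_left _ hx
      rw [ha] at this; simpa using this
    have memY : ∀ y ∈ Y, y = a := fun y hy => by
      have : y ∈ X ∪ Y := Finset.mem_union_right _ hy
      rw [ha] at this; simpa using this
    refine ⟨z, fun hz => hz1 (memX z hz), fun hz => hz1 (memY z hz), ?_, ?_⟩
    · intro x hx
      have hxa := memX x hx
      subst hxa
      exact hz2.mpr (by simpa using hx)
    · intro y hy
      have hya := memY y hy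
      subst hya
      intro hadj
      have : y ∈ X := by simpa using hz2.mp hadj
      exact (Finset.disjoint_left.mp hdisj this) hy
  · rw [Finset.card_eq_two] at h
    obtain ⟨a, b, hab, hs⟩ := h
    obtain ⟨z, hza, hzb, hA, hB⟩ := rook_pair a b (decide (a ∈ X)) (decide (b ∈ X)) hab
    have memU : ∀ x, x ∈ X ∪ Y → x = a ∨ x = b := fun x hx => by
      rw [hs] at hx; simpa using hx
    have memX : ∀ x ∈ X, x = a ∨ x = b := fun x hx =>
      memU x (Finset.mem_union_left _ hx)
    have memY : ∀ y ∈ Y, y = a ∨ y = b := fun y hy =>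
      memU y (Finset.mem_union_right _ hy)
    refine ⟨z, ?_, ?_, ?_, ?_⟩
    · intro hz
      rcases memX z hz with rfl | rfl
      · exact hza rfl
      · exact hzb rfl
    · intro hz
      rcases memY z hz with rfl | rfl
      · exact hza rfl
      · exact hzb rfl
    · intro x hx
      rcases memX x hx with rfl | rfl
      · exact hA.mpr (by simpa using hx)
      · exact hB.mpr (by simpa using hx)
    · intro y hy hadj
      rcases memY y hy with rfl | rfl
      · have : y ∈ X := by simpa using hA.mp hadj
        exact (Finset.disjoint_left.mp hdisj this) hy
      · have : y ∈ X := by simpa using hB.mp hadj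
        exact (Finset.disjoint_left.mp hdisj this) hy

/-- The extension indices of the claw and of the diamond both equal 4. -/
theorem extension_index_claw_and_diamond_eq_four :
    (∀ (V : Type) [Fintype V] (G : SimpleGraph V),
      HasExtensionProperty G 4 →
        Nonempty (clawGraph ↪g G) ∧ Nonempty (diamondGraph ↪g G)) ∧
    ∃ (n : ℕ) (H : SimpleGraph (Fin n)),
      HasExtensionProperty H 3 ∧
      IsEmpty (clawGraph ↪g H) ∧ IsEmpty (diamondGraph ↪g H) := by
  constructor
  · intro V _ G h
    classical
    constructor
    · -- claw
      obtain ⟨v1, -, -, -, -⟩ := h ∅ ∅ (by simp) (by norm_num)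
      obtain ⟨v2, -, hv2Y, -, hv2n⟩ := h ∅ {v1} (by simp) (by simp)
      obtain ⟨v3, -, hv3Y, -, hv3n⟩ := h ∅ {v1, v2} (by simp)
        (by have := Finset.card_insert_le v1 ({v2} : Finset V); simp at this ⊢; omega)
      obtain ⟨c, hcX, -, hcadj, -⟩ := h {v1, v2, v3} ∅ (by simp)
        (by
          have h1 := Finset.card_insert_le v1 ({v2, v3} : Finset V)
          have h2 := Finset.card_insert_le v2 ({v3} : Finset V)
          simp at h1 h2 ⊢; omega)
      have hc1 : G.Adj c v1 := hcadj v1 (by simp)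
      have hc2 : G.Adj c v2 := hcadj v2 (by simp)
      have hc3 : G.Adj c v3 := hcadj v3 (by simp)
      have h21 : ¬ G.Adj v2 v1 := hv2n v1 (by simp)
      have h31 : ¬ G.Adj v3 v1 := hv3n v1 (by simp)
      have h32 : ¬ G.Adj v3 v2 := hv3n v2 (by simp)
      have n21 : v2 ≠ v1 := by simpa using hv2Y
      have n31 : v3 ≠ v1 := by intro hh; apply hv3Y; simp [hh]
      have n32 : v3 ≠ v2 := by intro hh; apply hv3Y; simp [hh]
      have nc1 : c ≠ v1 := G.ne_of_adj hc1
      have nc2 : c ≠ v2 := G.ne_of_adj hc2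
      have nc3 : c ≠ v3 := G.ne_of_adj hc3
      refine ⟨⟨⟨![c, v1, v2, v3], ?_⟩, ?_⟩⟩
      · intro a b hab
        fin_cases a <;> fin_cases b <;>
          simp_all [Matrix.cons_val_zero, Matrix.cons_val_one] <;>
          first
            | rfl
            | (exfalso; first
                | exact nc1 hab | exact nc2 hab | exact nc3 hab
                | exact n21 hab | exact n31 hab | exact n32 hab
                | exact nc1 hab.symm | exact nc2 hab.symm | exact nc3 hab.symm
                | exact n21 hab.symm | exact n31 hab.symm | exact n32 hab.symm)
      · intro a b
        fin_cases a <;> fin_cases b <;>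
          simp [clawGraph, SimpleGraph.fromRel_adj, Function.Embedding.coeFn_mk, hc1, hc2, hc3,
            hc1.symm, hc2.symm, hc3.symm, h21, h31, h32,
            fun hh => h21 (G.adj_symm hh), fun hh => h31 (G.adj_symm hh),
            fun hh => h32 (G.adj_symm hh), n21, n31, n32, nc1, nc2, nc3] <;>
          first
            | exact fun hh => h21 (G.adj_symm hh)
            | exact fun hh => h31 (G.adj_symm hh)
            | exact fun hh => h32 (G.adj_symm hh)
            | exact hc1 | exact hc2 | exact hc3
            | exact hc1.symm | exact hc2.symm | exact hc3.symm
            | exact h21 | exact h31 | exact h32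
            | decide
    · -- diamond
      obtain ⟨a, -, -, -, -⟩ := h ∅ ∅ (by simp) (by norm_num)
      obtain ⟨b, hbX, -, hbadj, -⟩ := h {a} ∅ (by simp) (by simp)
      obtain ⟨c, hcX, -, hcadj, -⟩ := h {a, b} ∅ (by simp)
        (by have := Finset.card_insert_le a ({b} : Finset V); simp at this ⊢; omega)
      obtain ⟨d, hdX, hdY, hdadj, hdnadj⟩ := h {a, b} {c}
        (by rw [Finset.disjoint_singleton_right]; exact hcX)
        (by have := Finset.card_insert_le a ({b} : Finset V); simp at this ⊢; omega)
      have hba : G.Adj b a := hbadj a (by simp)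
      have hca : G.Adj c a := hcadj a (by simp)
      have hcb : G.Adj c b := hcadj b (by simp)
      have hda : G.Adj d a := hdadj a (by simp)
      have hdb : G.Adj d b := hdadj b (by simp)
      have hdc : ¬ G.Adj d c := hdnadj c (by simp)
      have nba : b ≠ a := G.ne_of_adj hba
      have nca : c ≠ a := by intro hh; apply hcX; simp [hh]
      have ncb : c ≠ b := by intro hh; apply hcX; simp [hh]
      have nda : d ≠ a := by intro hh; apply hdX; simp [hh]
      have ndb : d ≠ b := by intro hh; apply hdX; simp [hh]
      have ndc : d ≠ c := by simpa using hdY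
      refine ⟨⟨⟨![a, b, c, d], ?_⟩, ?_⟩⟩
      · intro x y hxy
        fin_cases x <;> fin_cases y <;>
          simp_all [Matrix.cons_val_zero, Matrix.cons_val_one] <;>
          first
            | rfl
            | (exfalso; first
                | exact nba hxy | exact nca hxy | exact ncb hxy
                | exact nda hxy | exact ndb hxy | exact ndc hxy
                | exact nba hxy.symm | exact nca hxy.symm | exact ncb hxy.symm
                | exact nda hxy.symm | exact ndb hxy.symm | exact ndc hxy.symm)
      · intro x y
        fin_cases x <;> fin_cases y <;>
          simp [diamondGraph, SimpleGraph.fromRel_adj, Function.Embedding.coeFn_mk, hba, hca, hcb, hda, hdb,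
            hba.symm, hca.symm, hcb.symm, hda.symm, hdb.symm, hdc,
            nba, nca, ncb, nda, ndb, ndc] <;>
          first
            | exact fun hh => hdc (G.adj_symm hh)
            | exact hba | exact hca | exact hcb | exact hda | exact hdb
            | exact hba.symm | exact hca.symm | exact hcb.symm | exact hda.symm | exact hdb.symm
            | exact hdc
            | decide
  · refine ⟨9, rookGraph, rook_ext, ⟨fun f => ?_⟩, ⟨fun f => ?_⟩⟩
    · exact rook_claw_free (f 0) (f 1) (f 2) (f 3)
        ⟨f.map_rel_iff.mpr (by decide), f.map_rel_iff.mpr (by decide),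
         f.map_rel_iff.mpr (by decide),
         fun hh => (by decide : ¬ clawGraph.Adj 1 2) (f.map_rel_iff.mp hh),
         fun hh => (by decide : ¬ clawGraph.Adj 1 3) (f.map_rel_iff.mp hh),
         fun hh => (by decide : ¬ clawGraph.Adj 2 3) (f.map_rel_iff.mp hh),
         fun hh => (by decide : (1 : Fin 4) ≠ 2) (f.injective hh),
         fun hh => (by decide : (1 : Fin 4) ≠ 3) (f.injective hh),
         fun hh => (by decide : (2 : Fin 4) ≠ 3) (f.injective hh)⟩
    · exact rook_diamond_free (f 0) (f 1) (f 2) (f 3)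
        ⟨f.map_rel_iff.mpr (by decide), f.map_rel_iff.mpr (by decide),
         f.map_rel_iff.mpr (by decide), f.map_rel_iff.mpr (by decide),
         f.map_rel_iff.mpr (by decide),
         fun hh => (by decide : ¬ diamondGraph.Adj 2 3) (f.map_rel_iff.mp hh),
         fun hh => (by decide : (2 : Fin 4) ≠ 3) (f.injective hh)⟩
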